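/- Let X be a polyhedral normed space, f : X → X real analytic and nonexpansive, and E ⊆ B_{X*}. Define S_E(f) = {x : φ(f(x)) = φ(x) for all φ ∈ E} and L_E = {x : φ(x) = ψ(x) for all φ, ψ ∈ E}. If there exist v, w ∈ S_E(f) with J(v−w) = E, then w + L_E ⊆ S_E(f). -/

import Mathlib

/-- The duality map: `J z` is the set of dual-unit-ball functionals attaining the norm at `z`. -/
def dualityMap {X : Type*} [NormedAddCommGroup X] [NormedSpace ℝ X] (z : X) :
    Set (X →L[ℝ] ℝ) := {φ | ‖φ‖ ≤ 1 ∧ φ z = ‖z‖}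

section Aux

set_option linter.unusedSectionVars false

variable {X : Type*} [NormedAddCommGroup X] [NormedSpace ℝ X] [FiniteDimensional ℝ X]

lemma my_ball_eq : {φ : X →L[ℝ] ℝ | ‖φ‖ ≤ 1} = Metric.closedBall 0 1 := by
  ext φ; simp [Metric.mem_closedBall]

lemma my_apply_le_norm {φ : X →L[ℝ] ℝ} (hφ : ‖φ‖ ≤ 1) (u : X) : φ u ≤ ‖u‖ := by
  calc φ u ≤ |φ u| := le_abs_self _
  _ ≤ ‖φ‖ * ‖u‖ := φ.le_opNorm u
  _ ≤ 1 * ‖u‖ := by gcongr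
  _ = ‖u‖ := one_mul _

lemma my_exists_attain (u : X) : ∃ φ : X →L[ℝ] ℝ, ‖φ‖ ≤ 1 ∧ φ u = ‖u‖ := by
  by_cases hu : u = 0
  · exact ⟨0, by simp, by simp [hu]⟩
  · obtain ⟨g, hg1, hg2⟩ := exists_dual_vector ℝ u (norm_ne_zero_iff.mpr hu)
    exact ⟨g, le_of_eq hg1, by exact_mod_cast hg2⟩

/-- the dual ball equals the convex hull of its extreme points -/
lemma my_hull (hpoly : (Set.extremePoints ℝ {φ : X →L[ℝ] ℝ | ‖φ‖ ≤ 1}).Finite) :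
    convexHull ℝ (Set.extremePoints ℝ {φ : X →L[ℝ] ℝ | ‖φ‖ ≤ 1})
      = {φ : X →L[ℝ] ℝ | ‖φ‖ ≤ 1} := by
  have hcomp : IsCompact {φ : X →L[ℝ] ℝ | ‖φ‖ ≤ 1} := by
    rw [my_ball_eq]; exact isCompact_closedBall 0 1
  have hconv : Convex ℝ {φ : X →L[ℝ] ℝ | ‖φ‖ ≤ 1} := by
    rw [my_ball_eq]; exact convex_closedBall 0 1
  have h := closure_convexHull_extremePoints hcomp hconv
  rwa [IsClosed.closure_eq] at h
  exact (hpoly.isCompact_convexHull ℝ).isClosed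

/-- every norm is attained by an extreme point of the dual ball -/
lemma my_extreme_attain (hpoly : (Set.extremePoints ℝ {φ : X →L[ℝ] ℝ | ‖φ‖ ≤ 1}).Finite)
    (u : X) : ∃ p ∈ Set.extremePoints ℝ {φ : X →L[ℝ] ℝ | ‖φ‖ ≤ 1}, p u = ‖u‖ := by
  classical
  set P := Set.extremePoints ℝ {φ : X →L[ℝ] ℝ | ‖φ‖ ≤ 1} with hP
  obtain ⟨φ, hφ1, hφ2⟩ := my_exists_attain u
  have hφmem : φ ∈ convexHull ℝ P := by rw [my_hull hpoly]; exact hφ1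
  have hPne : P.Nonempty := by
    rcases P.eq_empty_or_nonempty with h | h
    · exfalso; rw [h] at hφmem; simp at hφmem
    · exact h
  obtain ⟨p, hpP, hpmax⟩ := hpoly.toFinset.exists_max_image (fun g : X →L[ℝ] ℝ => g u)
    (by rcases hPne with ⟨q, hq⟩; exact ⟨q, hpoly.mem_toFinset.2 hq⟩)
  have hpP' : p ∈ P := hpoly.mem_toFinset.1 hpP
  have hple : p ∈ {φ : X →L[ℝ] ℝ | ‖φ‖ ≤ 1} := extremePoints_subset hpP'
  refine ⟨p, hpP', le_antisymm (my_apply_le_norm hple u) ?_⟩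
  have hsub : convexHull ℝ P ⊆ {g : X →L[ℝ] ℝ | g u ≤ p u} := by
    apply convexHull_min
    · intro g hg; exact hpmax g (hpoly.mem_toFinset.2 hg)
    · have heq : {g : X →L[ℝ] ℝ | g u ≤ p u} =
        (fun g : X →L[ℝ] ℝ => g u) ⁻¹' Set.Iic (p u) := rfl
      rw [heq]
      exact (convex_Iic (p u)).is_linear_preimage
        ⟨fun a b => by simp, fun c a => by simp⟩
  have := hsub hφmem
  rw [← hφ2]; exact this

lemma my_pos_min {α : Type*} {s : Set α} (hs : s.Finite) (g : α → ℝ)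
    (hg : ∀ a ∈ s, 0 < g a) : ∃ δ > 0, ∀ a ∈ s, δ ≤ g a := by
  classical
  rcases s.eq_empty_or_nonempty with h | h
  · exact ⟨1, one_pos, by simp [h]⟩
  · obtain ⟨a₀, ha₀, hmin⟩ := hs.toFinset.exists_min_image g
      (by rcases h with ⟨a, ha⟩; exact ⟨a, hs.mem_toFinset.2 ha⟩)
    exact ⟨g a₀, hg a₀ (hs.mem_toFinset.1 ha₀),
      fun a ha => hmin a (hs.mem_toFinset.2 ha)⟩

/-- Key norm lemma: near a point `z` of the polyhedral sphere, the norm is affine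
in a direction `y` on which the whole face `J z` takes a common value `c`. -/
lemma my_key (hpoly : (Set.extremePoints ℝ {φ : X →L[ℝ] ℝ | ‖φ‖ ≤ 1}).Finite)
    (z y : X) (c : ℝ) (hc : ∀ φ ∈ dualityMap z, φ y = c) :
    ∃ δ > 0, ∀ t : ℝ, |t| ≤ δ → ‖z + t • y‖ = ‖z‖ + t * c := by
  classical
  set P := Set.extremePoints ℝ {φ : X →L[ℝ] ℝ | ‖φ‖ ≤ 1} with hP
  set F := {p ∈ P | p ∉ dualityMap z} with hFdef
  have hFfin : F.Finite := hpoly.subset (Set.sep_subset _ _)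
  have hFlt : ∀ p ∈ F, p z < ‖z‖ := by
    rintro p ⟨hpP, hpne⟩
    have hple : p ∈ {φ : X →L[ℝ] ℝ | ‖φ‖ ≤ 1} := extremePoints_subset hpP
    have hle : p z ≤ ‖z‖ := my_apply_le_norm hple z
    rcases lt_or_eq_of_le hle with h | h
    · exact h
    · exact absurd ⟨hple, h⟩ hpne
  obtain ⟨δ, hδpos, hδ⟩ := my_pos_min hFfin
    (fun p => (‖z‖ - p z) / (2 * (|p y - c| + 1)))
    (by
      intro p hp
      apply div_pos
      · linarith [hFlt p hp]
      · positivity)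
  refine ⟨δ, hδpos, fun t ht => ?_⟩
  have hupper : ∀ p ∈ P, p (z + t • y) ≤ ‖z‖ + t * c := by
    intro p hpP
    have hple : p ∈ {φ : X →L[ℝ] ℝ | ‖φ‖ ≤ 1} := extremePoints_subset hpP
    have hval : p (z + t • y) = p z + t * p y := by
      rw [map_add, map_smul]; rfl
    by_cases hpd : p ∈ dualityMap z
    · rw [hval, hpd.2, hc p hpd]
    · have hpF : p ∈ F := ⟨hpP, hpd⟩
      have h1 : δ ≤ (‖z‖ - p z) / (2 * (|p y - c| + 1)) := hδ p hpF
      have h2 : p z < ‖z‖ := hFlt p hpF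
      have h3 : t * p y = t * c + t * (p y - c) := by ring
      have h4 : t * (p y - c) ≤ |t| * |p y - c| := by
        calc t * (p y - c) ≤ |t * (p y - c)| := le_abs_self _
        _ = |t| * |p y - c| := abs_mul _ _
      have h5 : |t| * |p y - c| ≤ δ * (|p y - c| + 1) := by
        apply mul_le_mul ht (by linarith) (abs_nonneg _) (le_of_lt hδpos)
      have hBpos : (0:ℝ) < 2 * (|p y - c| + 1) := by positivity
      have h1' : δ * (2 * (|p y - c| + 1)) ≤ ‖z‖ - p z := by
        rw [le_div_iff₀ hBpos] at h1; linarith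
      rw [hval]; nlinarith
  obtain ⟨q, hqP, hq⟩ := my_extreme_attain hpoly (z + t • y)
  obtain ⟨p, hpP, hp⟩ := my_extreme_attain hpoly z
  have hple2 : p ∈ {φ : X →L[ℝ] ℝ | ‖φ‖ ≤ 1} := extremePoints_subset hpP
  have hpd : p ∈ dualityMap z := ⟨hple2, hp⟩
  have hlow : ‖z‖ + t * c ≤ ‖z + t • y‖ := by
    have hval : p (z + t • y) = ‖z‖ + t * c := by
      rw [map_add, map_smul, smul_eq_mul, hp, hc p hpd]
    rw [← hval]
    exact my_apply_le_norm hpd.1 _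
  exact le_antisymm (hq ▸ hupper q hqP) hlow

end Aux

theorem stmt_6 {X : Type*} [NormedAddCommGroup X] [NormedSpace ℝ X]
    [FiniteDimensional ℝ X]
    (hpoly : (Set.extremePoints ℝ {φ : X →L[ℝ] ℝ | ‖φ‖ ≤ 1}).Finite)
    (f : X → X) (hf_an : ∀ x : X, AnalyticAt ℝ f x)
    (hf : ∀ u v : X, ‖f u - f v‖ ≤ ‖u - v‖)
    (E : Set (X →L[ℝ] ℝ)) (hE : E ⊆ {φ : X →L[ℝ] ℝ | ‖φ‖ ≤ 1})
    (v w : X)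
    (hv : v ∈ {x : X | ∀ φ ∈ E, φ (f x) = φ x})
    (hw : w ∈ {x : X | ∀ φ ∈ E, φ (f x) = φ x})
    (hvw : dualityMap (v - w) = E) :
    (fun z => w + z) '' {x : X | ∀ φ ∈ E, ∀ ψ ∈ E, φ x = ψ x}
      ⊆ {x : X | ∀ φ ∈ E, φ (f x) = φ x} := by
  rintro _ ⟨x, hx, rfl⟩
  simp only [Set.mem_setOf_eq] at hx hv hw ⊢
  intro φ hφE
  set z : X := (2:ℝ)⁻¹ • (v - w) with hzdef
  have h2z : v - w = (2:ℝ) • z := by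
    rw [hzdef, smul_smul]; norm_num
  have hnz : ‖v - w‖ = 2 * ‖z‖ := by
    rw [h2z, norm_smul]; simp
  have hEz : dualityMap z = E := by
    rw [← hvw]
    ext ψ
    simp only [dualityMap, Set.mem_setOf_eq]
    constructor
    · rintro ⟨h1, h2⟩
      refine ⟨h1, ?_⟩
      have : ψ (v - w) = (2:ℝ) * ψ z := by
        rw [h2z, map_smul, smul_eq_mul]
      rw [this, h2, hnz]
    · rintro ⟨h1, h2⟩
      refine ⟨h1, ?_⟩
      have hψz : ψ z = (2:ℝ)⁻¹ * ψ (v - w) := by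
        rw [hzdef, map_smul, smul_eq_mul]
      have hnz' : ‖z‖ = (2:ℝ)⁻¹ * ‖v - w‖ := by
        rw [hzdef, norm_smul]; simp
      rw [hψz, hnz', h2]
  set y : X := x - z with hydef
  set c : ℝ := φ x - ‖z‖ with hcdef
  have hφz : φ ∈ dualityMap z := by rw [hEz]; exact hφE
  have hc : ∀ ψ ∈ dualityMap z, ψ y = c := by
    intro ψ hψ
    have hψE : ψ ∈ E := by rw [← hEz]; exact hψ
    have hψx : ψ x = φ x := hx ψ hψE φ hφE
    rw [hydef, map_sub, hψx, hψ.2, hcdef]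
  obtain ⟨δ, hδpos, hδ⟩ := my_key hpoly z y c hc
  -- key squeeze: on the interval, every ψ ∈ E satisfies the equality
  have hmain : ∀ ψ, ψ ∈ E → ∀ t : ℝ, |t| ≤ δ →
      ψ (f (w + z + t • y)) = ψ w + ‖z‖ + t * c := by
    intro ψ hψE t ht
    have hψ1 : ‖ψ‖ ≤ 1 := hE hψE
    have hψvw : ψ (v - w) = ‖v - w‖ := by
      have : ψ ∈ dualityMap (v - w) := by rw [hvw]; exact hψE
      exact this.2
    have hψv : ψ v = ψ w + 2 * ‖z‖ := by
      have := map_sub ψ v w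
      rw [hψvw, hnz] at this
      linarith
    -- lower bound
    have hlow : ψ v - ψ (f (w + z + t • y)) ≤ ‖z‖ - t * c := by
      have h3 : v - (w + z + t • y) = z + (-t) • y := by
        rw [sub_eq_iff_eq_add.mp h2z]; module
      have h4 : ‖v - (w + z + t • y)‖ = ‖z‖ - t * c := by
        rw [h3, hδ (-t) (by rwa [abs_neg])]; ring
      have h5 : ψ v - ψ (f (w + z + t • y)) = ψ (f v - f (w + z + t • y)) := by
        rw [map_sub, hv ψ hψE]
      rw [h5, ← h4]
      exact (my_apply_le_norm hψ1 _).trans (hf _ _)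
    -- upper bound
    have hup : ψ (f (w + z + t • y)) - ψ w ≤ ‖z‖ + t * c := by
      have h3 : (w + z + t • y) - w = z + t • y := by abel
      have h4 : ‖(w + z + t • y) - w‖ = ‖z‖ + t * c := by rw [h3, hδ t ht]
      have h5 : ψ (f (w + z + t • y)) - ψ w = ψ (f (w + z + t • y) - f w) := by
        rw [map_sub, hw ψ hψE]
      rw [h5, ← h4]
      exact (my_apply_le_norm hψ1 _).trans (hf _ _)
    linarith
  -- analytic continuation
  set H : ℝ → ℝ := fun t => φ (f (w + z + t • y)) - (φ w + ‖z‖ + t * c) with hHdef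
  have hHan : AnalyticOnNhd ℝ H Set.univ := by
    intro t _
    have haff : AnalyticAt ℝ (fun t : ℝ => w + z + t • y) t :=
      analyticAt_const.add ((analyticAt_id).smul analyticAt_const)
    have h1 : AnalyticAt ℝ (fun t : ℝ => φ (f (w + z + t • y))) t :=
      (φ.analyticAt _).comp ((hf_an _).comp haff)
    have h2 : AnalyticAt ℝ (fun t : ℝ => φ w + ‖z‖ + t * c) t :=
      analyticAt_const.add (analyticAt_id.mul analyticAt_const)
    exact h1.sub h2
  have hHzero : Set.EqOn H 0 Set.univ := by
    apply hHan.eqOn_zero_of_preconnected_of_eventuallyEq_zero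
      isPreconnected_univ (Set.mem_univ (0:ℝ))
    filter_upwards [Metric.ball_mem_nhds (0:ℝ) hδpos] with t htb
    have : |t| ≤ δ := by
      rw [Metric.mem_ball, Real.dist_eq, sub_zero] at htb
      exact le_of_lt htb
    have := hmain φ hφE t this
    simp only [hHdef, Pi.zero_apply]
    rw [this]; ring
  have h1 := hHzero (Set.mem_univ (1:ℝ))
  simp only [hHdef, Pi.zero_apply, one_smul] at h1
  have hws : w + z + y = w + x := by rw [hydef]; abel
  rw [hws] at h1
  have : φ (f (w + x)) = φ w + ‖z‖ + 1 * c := by linarith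
  rw [this, map_add, hcdef]; ring
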